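/- Let n : ℕ, let sd(n) be the poset of nonempty finite subsets of Fin (n+1) ordered by inclusion, regarded as a category, and let W be the class of inclusions S ⊆ T with T = S ∪ {max T}. If a functor F : sd(n) ⥤ E into any category E sends every morphism of W to an isomorphism, then F sends every inclusion S ⊆ T of nonempty subsets with min S = min T to an isomorphism. -/
import Mathlib


open CategoryTheory

/-- The subdivision `sd([n])`: the poset of nonempty finite subsets of `Fin (n+1)`,
ordered by inclusion, regarded as a category. -/
abbrev Sd (n : ℕ) := {S : Finset (Fin (n + 1)) // S.Nonempty}

/-- The class of morphisms `S ⊆ T` of `sd([n])` with `T = S ∪ {max T}`; these are the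
cocartesian morphisms of the locally cocartesian fibration `max : sd([n]) → [n]`. -/
def sdW (n : ℕ) : MorphismProperty (Sd n) :=
  fun S T _ => T.1 = insert (T.1.max' T.2) S.1

lemma sd_key (n : ℕ) {E : Type*} [Category E] (F : Sd n ⥤ E)
    (hF : (sdW n).IsInvertedBy F) :
    ∀ (k : ℕ) (S : Sd n) (m : Fin (n + 1)) (_ : m ∈ S.1)
      (_ : ∀ x ∈ S.1, m ≤ x)
      (f : (⟨{m}, Finset.singleton_nonempty m⟩ : Sd n) ⟶ S),
      S.1.card = k → IsIso (F.map f) := by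
  intro k
  induction k using Nat.strong_induction_on with
  | _ k ih =>
    intro S m hm hmin f hcard
    by_cases h1 : S.1 ⊆ {m}
    · have hle : S ≤ ⟨{m}, Finset.singleton_nonempty m⟩ := h1
      have : IsIso f :=
        ⟨homOfLE hle, Subsingleton.elim _ _, Subsingleton.elim _ _⟩
      infer_instance
    · obtain ⟨x, hxS, hxm⟩ : ∃ x ∈ S.1, x ≠ m := by
        by_contra h
        push_neg at h
        exact h1 fun y hy => Finset.mem_singleton.2 (h y hy)
      set M := S.1.max' S.2 with hM
      have hmM : m < M :=
        lt_of_lt_of_le (lt_of_le_of_ne (hmin x hxS) (Ne.symm hxm)) (S.1.le_max' x hxS)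
      have hmS' : m ∈ S.1.erase M := Finset.mem_erase.2 ⟨ne_of_lt hmM, hm⟩
      set S' : Sd n := ⟨S.1.erase M, ⟨m, hmS'⟩⟩ with hS'
      have hsub : S' ≤ S := Finset.erase_subset _ _
      let w : S' ⟶ S := homOfLE hsub
      have hW : sdW n w := by
        show S.1 = insert (S.1.max' S.2) S'.1
        exact (Finset.insert_erase (S.1.max'_mem S.2)).symm
      let g : (⟨{m}, Finset.singleton_nonempty m⟩ : Sd n) ⟶ S' :=
        homOfLE (show ({m} : Finset (Fin (n+1))) ⊆ S'.1 from
          Finset.singleton_subset_iff.2 hmS')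
      have hg : IsIso (F.map g) :=
        ih S'.1.card (by
          have h2 : S'.1.card = S.1.card - 1 := Finset.card_erase_of_mem (S.1.max'_mem S.2)
          have h3 : 0 < S.1.card := Finset.card_pos.2 S.2
          omega) S' m hmS' (fun y hy => hmin y (Finset.mem_of_mem_erase hy)) g rfl
      have hw : IsIso (F.map w) := hF w hW
      have : F.map f = F.map g ≫ F.map w := by
        rw [← F.map_comp]; exact congrArg F.map (Subsingleton.elim _ _)
      rw [this]
      infer_instance

/-- If a functor `F : sd([n]) ⥤ E` sends every morphism of `W` to an isomorphism, then it
sends every inclusion `S ⊆ T` of nonempty subsets with `min S = min T` to an isomorphism. -/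
theorem isIso_map_of_min_eq_of_invertsW (n : ℕ) {E : Type*} [Category E]
    (F : Sd n ⥤ E) (hF : (sdW n).IsInvertedBy F) :
    ∀ (S T : Sd n) (f : S ⟶ T), S.1.min' S.2 = T.1.min' T.2 → IsIso (F.map f) := by
  intro S T f hmin
  set m := S.1.min' S.2 with hm
  have hmS : m ∈ S.1 := S.1.min'_mem S.2
  have hmT : m ∈ T.1 := hmin ▸ T.1.min'_mem T.2
  let g : (⟨{m}, Finset.singleton_nonempty m⟩ : Sd n) ⟶ S :=
    homOfLE (Finset.singleton_subset_iff.2 hmS)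
  let h : (⟨{m}, Finset.singleton_nonempty m⟩ : Sd n) ⟶ T :=
    homOfLE (Finset.singleton_subset_iff.2 hmT)
  have hg : IsIso (F.map g) :=
    sd_key n F hF S.1.card S m hmS (fun x hx => S.1.min'_le x hx) g rfl
  have hh : IsIso (F.map h) := by
    refine sd_key n F hF T.1.card T m hmT (fun x hx => ?_) h rfl
    rw [hmin]; exact T.1.min'_le x hx
  have hcomp : F.map g ≫ F.map f = F.map h := by
    rw [← F.map_comp]; exact congrArg F.map (Subsingleton.elim _ _)
  have : IsIso (F.map g ≫ F.map f) := hcomp ▸ hh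
  exact IsIso.of_isIso_comp_left (F.map g) (F.map f)
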